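/- For every θ ∈ Θ with |θ| ≤ ν₀/(2 L_a) one has V_θ ⊆ ℳ_θ V₀; more precisely, v_θ = ℳ_θ P_{V₀} v_θ for every v_θ ∈ V_θ, where P_{V₀} denotes the orthogonal projection of H onto V₀ with respect to (·,·)₀. -/

import Mathlib

noncomputable section

open scoped Classical

/-- An abstract family of non-negative bounded sesquilinear forms `a θ`, `b θ`
(linear in the first argument, conjugate-linear in the second) on a complex Hilbert
space `H`, parametrised by `θ` in a compact subset `Θ` of `ℝⁿ`, such that
`(·,·)_θ := a θ + b θ` is a family of inner products whose norms are equivalent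
to the norm of `H`. -/
structure FormFamily (n : ℕ) (H : Type*) [NormedAddCommGroup H] [InnerProductSpace ℂ H]
    [CompleteSpace H] where
  Θ : Set (EuclideanSpace ℝ (Fin n))
  compactΘ : IsCompact Θ
  a : EuclideanSpace ℝ (Fin n) → H → H → ℂ
  b : EuclideanSpace ℝ (Fin n) → H → H → ℂ
  a_addL : ∀ θ ∈ Θ, ∀ u v w : H, a θ (u + v) w = a θ u w + a θ v w
  a_smulL : ∀ θ ∈ Θ, ∀ (c : ℂ) (u w : H), a θ (c • u) w = c * a θ u w
  a_addR : ∀ θ ∈ Θ, ∀ u v w : H, a θ u (v + w) = a θ u v + a θ u w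
  a_smulR : ∀ θ ∈ Θ, ∀ (c : ℂ) (u w : H), a θ u (c • w) = starRingEnd ℂ c * a θ u w
  a_nonneg : ∀ θ ∈ Θ, ∀ u : H, 0 ≤ (a θ u u).re
  a_im : ∀ θ ∈ Θ, ∀ u : H, (a θ u u).im = 0
  a_bdd : ∀ θ ∈ Θ, ∃ C : ℝ, ∀ u w : H, ‖a θ u w‖ ≤ C * ‖u‖ * ‖w‖
  b_addL : ∀ θ ∈ Θ, ∀ u v w : H, b θ (u + v) w = b θ u w + b θ v w
  b_smulL : ∀ θ ∈ Θ, ∀ (c : ℂ) (u w : H), b θ (c • u) w = c * b θ u w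
  b_addR : ∀ θ ∈ Θ, ∀ u v w : H, b θ u (v + w) = b θ u v + b θ u w
  b_smulR : ∀ θ ∈ Θ, ∀ (c : ℂ) (u w : H), b θ u (c • w) = starRingEnd ℂ c * b θ u w
  b_nonneg : ∀ θ ∈ Θ, ∀ u : H, 0 ≤ (b θ u u).re
  b_im : ∀ θ ∈ Θ, ∀ u : H, (b θ u u).im = 0
  b_bdd : ∀ θ ∈ Θ, ∃ C : ℝ, ∀ u w : H, ‖b θ u w‖ ≤ C * ‖u‖ * ‖w‖
  equivNorm : ∀ θ ∈ Θ, ∃ c₁ c₂ : ℝ, 0 < c₁ ∧ ∀ u : H,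
    c₁ * ‖u‖ ^ 2 ≤ (a θ u u).re + (b θ u u).re ∧
      (a θ u u).re + (b θ u u).re ≤ c₂ * ‖u‖ ^ 2

namespace FormFamily

variable {n : ℕ} {H : Type*} [NormedAddCommGroup H] [InnerProductSpace ℂ H] [CompleteSpace H]

/-- The inner product `(u, w)_θ := a θ u w + b θ u w`. -/
def ip (S : FormFamily n H) (θ : EuclideanSpace ℝ (Fin n)) (u w : H) : ℂ :=
  S.a θ u w + S.b θ u w

/-- The squared `θ`-norm `‖u‖_θ ^ 2 = (u, u)_θ`. -/
def nsq (S : FormFamily n H) (θ : EuclideanSpace ℝ (Fin n)) (u : H) : ℝ :=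
  (S.ip θ u u).re

/-- The `θ`-norm `‖u‖_θ`. -/
def nrm (S : FormFamily n H) (θ : EuclideanSpace ℝ (Fin n)) (u : H) : ℝ :=
  Real.sqrt (S.nsq θ u)

/-- The degeneracy subspace `V_θ = {v : a_θ[v] = 0}`. -/
def V (S : FormFamily n H) (θ : EuclideanSpace ℝ (Fin n)) : Set H :=
  {v : H | S.a θ v v = 0}

/-- `W_θ`, the orthogonal complement of `V_θ` in `H` with respect to `(·,·)_θ`. -/
def W (S : FormFamily n H) (θ : EuclideanSpace ℝ (Fin n)) : Set H :=
  {w : H | ∀ v ∈ S.V θ, S.ip θ w v = 0}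

end FormFamily

/-- `f : H → ℂ` is a bounded conjugate-linear functional. -/
def IsBddConjLinear {H : Type*} [NormedAddCommGroup H] [InnerProductSpace ℂ H]
    (f : H → ℂ) : Prop :=
  (∀ u v : H, f (u + v) = f u + f v) ∧
    (∀ (c : ℂ) (u : H), f (c • u) = starRingEnd ℂ c * f u) ∧
    ∃ C : ℝ, ∀ u : H, ‖f u‖ ≤ C * ‖u‖

/-- The homogenised form `a^h_θ(v,vt) = a''₀(v,vt)θ·θ - a₀(N_θ v, N_θ vt)`. -/
def ahom {n : ℕ} {H : Type*} [NormedAddCommGroup H] [InnerProductSpace ℂ H] [CompleteSpace H]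
    (S : FormFamily n H) (a'' : H → H → Fin n → Fin n → ℂ)
    (N : EuclideanSpace ℝ (Fin n) → H → H) (θ : EuclideanSpace ℝ (Fin n)) (v vt : H) : ℂ :=
  (∑ j, ∑ k, a'' v vt j k * (θ j : ℂ) * (θ k : ℂ)) - S.a 0 (N θ v) (N θ vt)

section SesqAux

variable {H : Type*} [NormedAddCommGroup H] [InnerProductSpace ℂ H]
variable {f : H → H → ℂ}

lemma sesq_subL (haddL : ∀ u v w : H, f (u + v) w = f u w + f v w)
    (hsmulL : ∀ (c : ℂ) (u w : H), f (c • u) w = c * f u w) (u v w : H) :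
    f (u - v) w = f u w - f v w := by
  have h : u - v = u + (-1 : ℂ) • v := by
    rw [neg_one_smul, sub_eq_add_neg]
  rw [h, haddL, hsmulL]; ring

lemma sesq_subR (haddR : ∀ u v w : H, f u (v + w) = f u v + f u w)
    (hsmulR : ∀ (c : ℂ) (u w : H), f u (c • w) = starRingEnd ℂ c * f u w) (u v w : H) :
    f u (v - w) = f u v - f u w := by
  have h : v - w = v + (-1 : ℂ) • w := by
    rw [neg_one_smul, sub_eq_add_neg]
  rw [h, haddR, hsmulR]
  simp; ring

lemma sesq_herm
    (haddL : ∀ u v w : H, f (u + v) w = f u w + f v w)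
    (haddR : ∀ u v w : H, f u (v + w) = f u v + f u w)
    (hsmulL : ∀ (c : ℂ) (u w : H), f (c • u) w = c * f u w)
    (hsmulR : ∀ (c : ℂ) (u w : H), f u (c • w) = starRingEnd ℂ c * f u w)
    (him : ∀ u : H, (f u u).im = 0) (u w : H) :
    f w u = starRingEnd ℂ (f u w) := by
  have e1 : f (u + w) (u + w) = f u u + f u w + (f w u + f w w) := by
    rw [haddL, haddR, haddR]
  have h1 : (f u w).im + (f w u).im = 0 := by
    have h := him (u + w)
    rw [e1] at h
    simp only [Complex.add_im, him u, him w, zero_add, add_zero] at h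
    linarith
  have e2 : f (u + Complex.I • w) (u + Complex.I • w)
      = f u u + f w w + Complex.I * (f w u - f u w) := by
    rw [haddL, haddR, haddR, hsmulL, hsmulL, hsmulR, hsmulR, Complex.conj_I]
    linear_combination (-(f w w)) * Complex.I_mul_I
  have h2 : (f w u).re - (f u w).re = 0 := by
    have h := him (u + Complex.I • w)
    rw [e2] at h
    simp only [Complex.add_im, Complex.mul_im, Complex.sub_re, Complex.sub_im,
      Complex.I_re, Complex.I_im, him u, him w] at h
    linarith
  apply Complex.ext <;>
    simp only [Complex.conj_re, Complex.conj_im] <;> linarith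

lemma sesq_degenerate
    (haddL : ∀ u v w : H, f (u + v) w = f u w + f v w)
    (haddR : ∀ u v w : H, f u (v + w) = f u v + f u w)
    (hsmulL : ∀ (c : ℂ) (u w : H), f (c • u) w = c * f u w)
    (hsmulR : ∀ (c : ℂ) (u w : H), f u (c • w) = starRingEnd ℂ c * f u w)
    (hnn : ∀ u : H, 0 ≤ (f u u).re)
    (him : ∀ u : H, (f u u).im = 0)
    {v : H} (hv : f v v = 0) (w : H) : f v w = 0 := by
  by_contra hz
  have hherm := sesq_herm haddL haddR hsmulL hsmulR him
  have hns : 0 < Complex.normSq (f v w) := by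
    rwa [Complex.normSq_pos]
  set s : ℝ := ((f w w).re + 1) / (2 * Complex.normSq (f v w)) with hs
  set α : ℂ := ((-s : ℝ) : ℂ) * starRingEnd ℂ (f v w) with hα
  have e : f (α • v + w) (α • v + w)
      = α * f v w + starRingEnd ℂ (α * f v w) + f w w := by
    rw [haddL, haddR, haddR, hsmulL, hsmulL, hsmulR, hsmulR, hv, hherm v w]
    simp only [map_mul, mul_zero, zero_add]
    ring
  have hαz : α * f v w = ((-s * Complex.normSq (f v w) : ℝ) : ℂ) := by
    rw [hα, mul_assoc, mul_comm (starRingEnd ℂ (f v w)) (f v w), Complex.mul_conj]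
    push_cast
    ring
  have hre : 0 ≤ (f (α • v + w) (α • v + w)).re := hnn _
  rw [e, hαz] at hre
  simp only [Complex.add_re, Complex.conj_ofReal, Complex.ofReal_re] at hre
  have h2s : 2 * (s * Complex.normSq (f v w)) = (f w w).re + 1 := by
    rw [hs]; field_simp
  linarith [hre, h2s]

end SesqAux

/-- Type synonym used to carry the `(·,·)₀` inner product structure. -/
def SynIP (H : Type*) : Type _ := H

lemma FormFamily.exists_proj {n : ℕ} {H : Type*} [NormedAddCommGroup H]
    [InnerProductSpace ℂ H] [CompleteSpace H] (S : FormFamily n H)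
    (h0 : (0 : EuclideanSpace ℝ (Fin n)) ∈ S.Θ) (x : H) :
    ∃ p ∈ S.V 0, ∀ v' ∈ S.V 0, S.ip 0 (x - p) v' = 0 := by
  classical
  -- basic properties of `a 0` and `ip 0`
  have aL := S.a_addL 0 h0
  have aR := S.a_addR 0 h0
  have asL := S.a_smulL 0 h0
  have asR := S.a_smulR 0 h0
  have ann := S.a_nonneg 0 h0
  have aim := S.a_im 0 h0
  have ipaddL : ∀ u v w : H, S.ip 0 (u + v) w = S.ip 0 u w + S.ip 0 v w := by
    intro u v w
    simp only [FormFamily.ip, aL u v w, S.b_addL 0 h0 u v w]; ring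
  have ipaddR : ∀ u v w : H, S.ip 0 u (v + w) = S.ip 0 u v + S.ip 0 u w := by
    intro u v w
    simp only [FormFamily.ip, aR u v w, S.b_addR 0 h0 u v w]; ring
  have ipsmulL : ∀ (c : ℂ) (u w : H), S.ip 0 (c • u) w = c * S.ip 0 u w := by
    intro c u w
    simp only [FormFamily.ip, asL c u w, S.b_smulL 0 h0 c u w]; ring
  have ipsmulR : ∀ (c : ℂ) (u w : H), S.ip 0 u (c • w) = starRingEnd ℂ c * S.ip 0 u w := by
    intro c u w
    simp only [FormFamily.ip, asR c u w, S.b_smulR 0 h0 c u w]; ring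
  have ipnn : ∀ u : H, 0 ≤ (S.ip 0 u u).re := by
    intro u
    simp only [FormFamily.ip, Complex.add_re]
    exact add_nonneg (ann u) (S.b_nonneg 0 h0 u)
  have ipim : ∀ u : H, (S.ip 0 u u).im = 0 := by
    intro u
    simp only [FormFamily.ip, Complex.add_im, aim u, S.b_im 0 h0 u, add_zero]
  have iph := sesq_herm ipaddL ipaddR ipsmulL ipsmulR ipim
  have nsq_eq : ∀ u : H, S.nsq 0 u = (S.a 0 u u).re + (S.b 0 u u).re := by
    intro u; simp [FormFamily.nsq, FormFamily.ip, Complex.add_re]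
  obtain ⟨c₁, c₂, hc₁, hc⟩ := S.equivNorm 0 h0
  have hdef : ∀ u : H, S.ip 0 u u = 0 → u = 0 := by
    intro u hu
    have h1 : c₁ * ‖u‖ ^ 2 ≤ S.nsq 0 u := by
      rw [nsq_eq]; exact (hc u).1
    have h2 : S.nsq 0 u = 0 := by
      simp only [FormFamily.nsq, hu, Complex.zero_re]
    have h3 : ‖u‖ = 0 := by
      by_contra hne
      have hpos : 0 < ‖u‖ := lt_of_le_of_ne (norm_nonneg u) (Ne.symm hne)
      have : 0 < c₁ * ‖u‖ ^ 2 := mul_pos hc₁ (pow_pos hpos 2)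
      linarith
    exact norm_eq_zero.mp h3
  -- instances on the synonym
  letI : AddCommGroup (SynIP H) := inferInstanceAs (AddCommGroup H)
  letI : Module ℂ (SynIP H) := inferInstanceAs (Module ℂ H)
  let core : InnerProductSpace.Core ℂ (SynIP H) :=
    { inner := fun u w => S.ip 0 (w : H) (u : H)
      conj_inner_symm := fun u w => (iph u w).symm
      re_inner_nonneg := fun u => ipnn u
      add_left := fun u v w => ipaddR w u v
      smul_left := fun u w r => ipsmulR r w u
      definite := fun u hu => hdef u hu }
  letI : NormedAddCommGroup (SynIP H) := core.toNormedAddCommGroup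
  letI : InnerProductSpace ℂ (SynIP H) := InnerProductSpace.ofCore core.toCore
  have hnorm : ∀ u : SynIP H, ‖u‖ = Real.sqrt (S.nsq 0 (u : H)) := fun u => rfl
  -- the identity maps are bounded in both directions
  have hb1 : ∀ u : H, Real.sqrt (S.nsq 0 u) ≤ Real.sqrt (|c₂| + 1) * ‖u‖ := by
    intro u
    have h1 : S.nsq 0 u ≤ (|c₂| + 1) * ‖u‖ ^ 2 := by
      have h2 : S.nsq 0 u ≤ c₂ * ‖u‖ ^ 2 := by rw [nsq_eq]; exact (hc u).2
      nlinarith [sq_nonneg ‖u‖, le_abs_self c₂]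
    calc Real.sqrt (S.nsq 0 u) ≤ Real.sqrt ((|c₂| + 1) * ‖u‖ ^ 2) := Real.sqrt_le_sqrt h1
      _ = Real.sqrt (|c₂| + 1) * ‖u‖ := by
          rw [Real.sqrt_mul (by positivity), Real.sqrt_sq (norm_nonneg u)]
  have hb2 : ∀ u : H, ‖u‖ ≤ Real.sqrt (1 / c₁) * Real.sqrt (S.nsq 0 u) := by
    intro u
    have h1 : ‖u‖ ^ 2 ≤ S.nsq 0 u / c₁ := by
      rw [le_div_iff₀ hc₁]
      have := (hc u).1
      rw [nsq_eq]; linarith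
    calc ‖u‖ = Real.sqrt (‖u‖ ^ 2) := (Real.sqrt_sq (norm_nonneg u)).symm
      _ ≤ Real.sqrt (S.nsq 0 u / c₁) := Real.sqrt_le_sqrt h1
      _ = Real.sqrt (1 / c₁ * S.nsq 0 u) := by rw [one_div, div_eq_inv_mul]
      _ = Real.sqrt (1 / c₁) * Real.sqrt (S.nsq 0 u) := Real.sqrt_mul (by positivity) _
  let j : H →ₗ[ℂ] SynIP H :=
    { toFun := fun u => u, map_add' := fun _ _ => rfl, map_smul' := fun _ _ => rfl }
  let j' : SynIP H →ₗ[ℂ] H :=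
    { toFun := fun u => u, map_add' := fun _ _ => rfl, map_smul' := fun _ _ => rfl }
  let J : H →L[ℂ] SynIP H := j.mkContinuous (Real.sqrt (|c₂| + 1)) (fun u => by
    rw [hnorm]; exact hb1 u)
  let J' : SynIP H →L[ℂ] H := j'.mkContinuous (Real.sqrt (1 / c₁)) (fun u => by
    rw [hnorm]; exact hb2 u)
  let e : H ≃ᵤ SynIP H :=
    { toFun := fun u => u
      invFun := fun u => u
      left_inv := fun _ => rfl
      right_inv := fun _ => rfl
      uniformContinuous_toFun := J.uniformContinuous
      uniformContinuous_invFun := J'.uniformContinuous }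
  haveI : CompleteSpace (SynIP H) := e.completeSpace_iff.mp inferInstance
  -- the subspace V₀
  have adeg : ∀ v : H, S.a 0 v v = 0 → ∀ w : H, S.a 0 v w = 0 := by
    intro v hv w
    exact sesq_degenerate aL aR asL asR ann aim hv w
  let K : Submodule ℂ (SynIP H) :=
    { carrier := S.V 0
      zero_mem' := by
        show S.a 0 0 0 = 0
        simpa using asL 0 0 0
      add_mem' := by
        intro u v hu hv
        show S.a 0 ((u : H) + v) ((u : H) + v) = 0
        erw [aL, adeg u hu, adeg v hv, add_zero]
      smul_mem' := by
        intro c u hu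
        show S.a 0 (c • (u : H)) (c • (u : H)) = 0
        erw [asL, adeg u hu, mul_zero] }
  -- V₀ is closed in H
  obtain ⟨Ca, hCa⟩ := S.a_bdd 0 h0
  have hclosed : IsClosed (S.V 0 : Set H) := by
    apply IsSeqClosed.isClosed
    intro uk v huk hlim
    show S.a 0 v v = 0
    have key : ∀ k : ℕ, ‖S.a 0 v v‖ ≤ Ca * ‖v - uk k‖ * (‖v‖ + ‖uk k‖) := by
      intro k
      have h1 : S.a 0 v v = S.a 0 (v - uk k) v + S.a 0 (uk k) (v - uk k) := by
        rw [sesq_subL aL asL, sesq_subR aR asR, huk k]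
        ring
      calc ‖S.a 0 v v‖
          ≤ ‖S.a 0 (v - uk k) v‖ + ‖S.a 0 (uk k) (v - uk k)‖ := by
            rw [h1]; exact norm_add_le _ _
        _ ≤ Ca * ‖v - uk k‖ * ‖v‖ + Ca * ‖uk k‖ * ‖v - uk k‖ :=
            add_le_add (hCa _ _) (hCa _ _)
        _ = Ca * ‖v - uk k‖ * (‖v‖ + ‖uk k‖) := by ring
    have h3 : Filter.Tendsto (fun k => ‖v - uk k‖) Filter.atTop (nhds 0) := by
      have := tendsto_iff_norm_sub_tendsto_zero.mp hlim
      simpa [norm_sub_rev] using this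
    have h4 : Filter.Tendsto (fun k => ‖v‖ + ‖uk k‖) Filter.atTop (nhds (‖v‖ + ‖v‖)) :=
      tendsto_const_nhds.add hlim.norm
    have hlim2 : Filter.Tendsto (fun k => Ca * ‖v - uk k‖ * (‖v‖ + ‖uk k‖))
        Filter.atTop (nhds 0) := by
      have := ((tendsto_const_nhds (x := Ca)).mul h3).mul h4
      simpa using this
    have h5 : ‖S.a 0 v v‖ ≤ 0 := ge_of_tendsto' hlim2 key
    have h6 : ‖S.a 0 v v‖ = 0 := le_antisymm h5 (norm_nonneg _)
    exact norm_eq_zero.mp h6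
  have himg : (⇑e) '' (S.V 0 : Set H) = ↑K := by
    ext y
    constructor
    · rintro ⟨x', hx', rfl⟩; exact hx'
    · intro hy; exact ⟨y, hy, rfl⟩
  haveI : CompleteSpace K :=
    IsComplete.completeSpace_coe
      (himg ▸ (IsUniformInducing.isComplete_iff e.isUniformInducing).mpr hclosed.isComplete)
  -- orthogonal projection
  let p : SynIP H := (Submodule.orthogonalProjectionOnto K (x : SynIP H) : SynIP H)
  have hpK : p ∈ K := (Submodule.orthogonalProjectionOnto K (x : SynIP H)).2
  have horth := Submodule.sub_starProjection_mem_orthogonal (K := K) (x : SynIP H)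
  refine ⟨p, hpK, ?_⟩
  intro v' hv'
  have := (Submodule.mem_orthogonal K _).mp horth v' hv'
  exact this

theorem statement5
    {n : ℕ} (hn : 0 < n) {H : Type*} [NormedAddCommGroup H] [InnerProductSpace ℂ H]
    [CompleteSpace H] (S : FormFamily n H)
    (K : ℝ) (hK0 : 0 < K)
    (hK : ∀ θ₁ ∈ S.Θ, ∀ θ₂ ∈ S.Θ, ∀ u : H, S.nrm θ₁ u ≤ K * S.nrm θ₂ u)
    (La : ℝ) (hLa0 : 0 < La)
    (hLa : ∀ θ₁ ∈ S.Θ, ∀ θ₂ ∈ S.Θ, ∀ u w : H,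
      ‖S.a θ₁ u w - S.a θ₂ u w‖ ≤ La * ‖θ₁ - θ₂‖ * S.nrm θ₁ u * S.nrm θ₁ w)
    (h0 : (0 : EuclideanSpace ℝ (Fin n)) ∈ S.Θ)
    (ν₀ : ℝ) (hν₀ : 0 < ν₀)
    (hgap0 : ∀ w ∈ S.W 0, ν₀ * S.nsq 0 w ≤ (S.a 0 w w).re)
    (Ncal : EuclideanSpace ℝ (Fin n) → H → H)
    (hNcal : ∀ θ ∈ S.Θ, ‖θ‖ ≤ ν₀ / (2 * La) → ∀ v ∈ S.V 0,
      Ncal θ v ∈ S.W 0 ∧ ∀ w ∈ S.W 0, S.a θ (Ncal θ v) w = - S.a θ v w)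
 :
    ∀ θ ∈ S.Θ, ‖θ‖ ≤ ν₀ / (2 * La) →
      S.V θ ⊆ (fun v => v + Ncal θ v) '' S.V 0 ∧
        ∀ vθ ∈ S.V θ, ∀ p : H, p ∈ S.V 0 →
          (∀ v' ∈ S.V 0, S.ip 0 (vθ - p) v' = 0) → vθ = p + Ncal θ p := by
  intro θ hθ hθn
  -- sesquilinear facts for `a θ`
  have aLθ := S.a_addL θ hθ
  have aRθ := S.a_addR θ hθ
  have asLθ := S.a_smulL θ hθ
  have asRθ := S.a_smulR θ hθ
  have adegθ : ∀ v : H, S.a θ v v = 0 → ∀ w : H, S.a θ v w = 0 := by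
    intro v hv w
    exact sesq_degenerate aLθ aRθ asLθ asRθ (S.a_nonneg θ hθ) (S.a_im θ hθ) hv w
  -- `ip 0` facts
  have ipaddL : ∀ u v w : H, S.ip 0 (u + v) w = S.ip 0 u w + S.ip 0 v w := by
    intro u v w
    simp only [FormFamily.ip, S.a_addL 0 h0 u v w, S.b_addL 0 h0 u v w]; ring
  have ipsmulL : ∀ (c : ℂ) (u w : H), S.ip 0 (c • u) w = c * S.ip 0 u w := by
    intro c u w
    simp only [FormFamily.ip, S.a_smulL 0 h0 c u w, S.b_smulL 0 h0 c u w]; ring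
  have nsq_nn : ∀ u : H, 0 ≤ S.nsq 0 u := by
    intro u
    simp only [FormFamily.nsq, FormFamily.ip, Complex.add_re]
    exact add_nonneg (S.a_nonneg 0 h0 u) (S.b_nonneg 0 h0 u)
  obtain ⟨c₁, c₂, hc₁, hc⟩ := S.equivNorm 0 h0
  have key : ∀ vθ ∈ S.V θ, ∀ p : H, p ∈ S.V 0 →
      (∀ v' ∈ S.V 0, S.ip 0 (vθ - p) v' = 0) → vθ = p + Ncal θ p := by
    intro vθ hvθ p hp horth
    obtain ⟨hqW, hNa⟩ := hNcal θ hθ hθn p hp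
    set u : H := vθ - p - Ncal θ p with hu
    have huW : u ∈ S.W 0 := by
      intro v' hv'
      have e1 : S.ip 0 u v' = S.ip 0 (vθ - p) v' - S.ip 0 (Ncal θ p) v' :=
        sesq_subL ipaddL ipsmulL _ _ _
      rw [e1, horth v' hv', hqW v' hv', sub_zero]
    have hau : S.a θ u u = 0 := by
      have e2 : S.a θ u u = S.a θ (vθ - p) u - S.a θ (Ncal θ p) u :=
        sesq_subL aLθ asLθ _ _ _
      have e3 : S.a θ (vθ - p) u = S.a θ vθ u - S.a θ p u :=
        sesq_subL aLθ asLθ _ _ _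
      rw [e2, e3, adegθ vθ hvθ u, hNa u huW]
      ring
    -- quantitative estimate
    have hbound := hLa 0 h0 θ hθ u u
    rw [hau, sub_zero] at hbound
    have hnrm : S.nrm 0 u * S.nrm 0 u = S.nsq 0 u := Real.mul_self_sqrt (nsq_nn u)
    have h1 : (S.a 0 u u).re ≤ La * ‖θ‖ * S.nsq 0 u := by
      calc (S.a 0 u u).re ≤ ‖S.a 0 u u‖ := by
            exact Complex.re_le_norm _
        _ ≤ La * ‖(0 : EuclideanSpace ℝ (Fin n)) - θ‖ * S.nrm 0 u * S.nrm 0 u := hbound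
        _ = La * ‖θ‖ * S.nsq 0 u := by rw [zero_sub, norm_neg, mul_assoc, hnrm]
    have h2 := hgap0 u huW
    have h3 : La * ‖θ‖ ≤ ν₀ / 2 := by
      have h3' : La * ‖θ‖ ≤ La * (ν₀ / (2 * La)) :=
        mul_le_mul_of_nonneg_left hθn hLa0.le
      calc La * ‖θ‖ ≤ La * (ν₀ / (2 * La)) := h3'
        _ = ν₀ / 2 := by field_simp
    have h4 : S.nsq 0 u ≤ 0 := by
      nlinarith [mul_le_mul_of_nonneg_right h3 (nsq_nn u), h1, h2, hν₀, nsq_nn u]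
    have h5 : c₁ * ‖u‖ ^ 2 ≤ S.nsq 0 u := by
      have := (hc u).1
      simpa [FormFamily.nsq, FormFamily.ip, Complex.add_re] using this
    have hu0 : u = 0 := by
      have h6 : ‖u‖ = 0 := by
        by_contra hne
        have hpos : 0 < ‖u‖ := lt_of_le_of_ne (norm_nonneg u) (Ne.symm hne)
        have : 0 < c₁ * ‖u‖ ^ 2 := mul_pos hc₁ (pow_pos hpos 2)
        linarith
      exact norm_eq_zero.mp h6
    have h7 : vθ - (p + Ncal θ p) = 0 := by
      rw [sub_add_eq_sub_sub]
      exact hu ▸ hu0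
    exact sub_eq_zero.mp h7
  refine ⟨?_, key⟩
  intro vθ hvθ
  obtain ⟨p, hp, horth⟩ := S.exists_proj h0 vθ
  exact ⟨p, hp, (key vθ hvθ p hp horth).symm⟩
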